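/- Let X be a Polish space, A ⊆ C(X) a pointwise bounded family of continuous functions, and suppose every sequence in A has a pointwise convergent subsequence (with limit in ℝ^X). Then every function in the closure of A in ℝ^X (pointwise topology) is of Baire class 1, i.e., is a pointwise limit of a sequence of continuous functions on X. -/

import Mathlib

open Filter Topology Set Metric

universe u

variable {X : Type u}

/-- Auxiliary: a set is F_sigma. -/
def IsFsigmaBFT [TopologicalSpace X] (s : Set X) : Prop :=
  ∃ C : ℕ → Set X, (∀ n, IsClosed (C n)) ∧ s = ⋃ n, C n

section Fsigma
variable [TopologicalSpace X]

lemma IsClosed.isFsigmaBFT {s : Set X} (hs : IsClosed s) : IsFsigmaBFT s :=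
  ⟨fun _ => s, fun _ => hs, (iUnion_const s).symm⟩

lemma isFsigmaBFT_empty : IsFsigmaBFT (∅ : Set X) := isClosed_empty.isFsigmaBFT

lemma IsFsigmaBFT.iUnion {s : ℕ → Set X} (h : ∀ n, IsFsigmaBFT (s n)) :
    IsFsigmaBFT (⋃ n, s n) := by
  choose C hCcl hCeq using h
  refine ⟨fun m => C (Nat.pairEquiv.symm m).1 (Nat.pairEquiv.symm m).2,
    fun m => hCcl _ _, ?_⟩
  ext x
  simp only [mem_iUnion]
  constructor
  · rintro ⟨n, hx⟩
    rw [hCeq n] at hx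
    rcases mem_iUnion.1 hx with ⟨k, hk⟩
    exact ⟨Nat.pairEquiv (n, k), by simpa using hk⟩
  · rintro ⟨m, hm⟩
    exact ⟨(Nat.pairEquiv.symm m).1, by rw [hCeq]; exact mem_iUnion.2 ⟨_, hm⟩⟩

lemma IsFsigmaBFT.inter {s t : Set X} (hs : IsFsigmaBFT s) (ht : IsFsigmaBFT t) :
    IsFsigmaBFT (s ∩ t) := by
  obtain ⟨C, hCcl, rfl⟩ := hs
  obtain ⟨D, hDcl, rfl⟩ := ht
  refine ⟨fun m => C (Nat.pairEquiv.symm m).1 ∩ D (Nat.pairEquiv.symm m).2,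
    fun m => (hCcl _).inter (hDcl _), ?_⟩
  ext x
  simp only [mem_inter_iff, mem_iUnion]
  constructor
  · rintro ⟨⟨n, hn⟩, ⟨k, hk⟩⟩
    exact ⟨Nat.pairEquiv (n, k), by simpa using ⟨hn, hk⟩⟩
  · rintro ⟨m, hm, hm'⟩
    exact ⟨⟨_, hm⟩, ⟨_, hm'⟩⟩

end Fsigma

lemma isFsigmaBFT_inter_open [MetricSpace X] {C O : Set X} (hC : IsClosed C) (hO : IsOpen O) :
    IsFsigmaBFT (C ∩ O) := by
  refine ⟨fun n => C ∩ (Metric.thickening (1 / (n + 1)) Oᶜ)ᶜ, fun n =>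
    hC.inter (Metric.isOpen_thickening.isClosed_compl), ?_⟩
  ext x
  simp only [mem_inter_iff, mem_iUnion, mem_compl_iff]
  constructor
  · rintro ⟨hxC, hxO⟩
    have hx : x ∉ Oᶜ := fun h => h hxO
    have hcl : IsClosed Oᶜ := hO.isClosed_compl
    rcases Metric.isOpen_iff.1 hcl.isOpen_compl x (by simpa using hxO) with ⟨ε, hε, hball⟩
    rcases exists_nat_one_div_lt hε with ⟨n, hn⟩
    refine ⟨n, hxC, fun hth => ?_⟩
    rcases Metric.mem_thickening_iff.1 hth with ⟨z, hz, hdz⟩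
    have : z ∈ Oᶜᶜ := hball (by simpa [Metric.mem_ball, dist_comm] using hdz.trans hn)
    exact this hz
  · rintro ⟨n, hxC, hth⟩
    refine ⟨hxC, by_contra fun hxO => hth ?_⟩
    exact Metric.self_subset_thickening (by positivity) _ (by simpa using hxO)

/-- The "no closed set where both level sets are dense" property. -/
def BarelyBFT [TopologicalSpace X] (ψ : X → ℝ) (p q : ℝ) : Prop :=
  ∀ F : Set X, IsClosed F → F.Nonempty →
    F ⊆ closure (F ∩ {x | ψ x ≤ p}) → F ⊆ closure (F ∩ {x | q ≤ ψ x}) → False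

/-- Transfinite derivation iteration. -/
noncomputable def dItBFT (D : Set X → Set X) (a : Ordinal.{u}) : Set X :=
  ⋂ b : {b : Ordinal.{u} // b < a}, D (dItBFT D b.1)
termination_by a
decreasing_by exact b.2

lemma dItBFT_eq (D : Set X → Set X) (a : Ordinal.{u}) :
    dItBFT D a = ⋂ b : {b : Ordinal.{u} // b < a}, D (dItBFT D b.1) := by
  rw [dItBFT]

lemma mem_dItBFT {D : Set X → Set X} {a : Ordinal.{u}} {x : X} :
    x ∈ dItBFT D a ↔ ∀ b < a, x ∈ D (dItBFT D b) := by
  rw [dItBFT_eq]; constructor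
  · intro h b hb; exact mem_iInter.1 h ⟨b, hb⟩
  · intro h; exact mem_iInter.2 fun b => h b.1 b.2

lemma dItBFT_anti {X : Type u} {D : Set X → Set X} {a a' : Ordinal.{u}} (h : a ≤ a') :
    dItBFT D a' ⊆ dItBFT D a := fun x hx =>
  mem_dItBFT.2 fun b hb => mem_dItBFT.1 hx b (hb.trans_le h)

section L2x
variable [MetricSpace X] [SecondCountableTopology X] {ψ : X → ℝ} {p q : ℝ}

def derivBFT (ψ : X → ℝ) (p q : ℝ) (S : Set X) : Set X :=
  closure (S ∩ {x | ψ x ≤ p}) ∩ closure (S ∩ {x | q ≤ ψ x})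

lemma derivBFT_mono : Monotone (derivBFT ψ p q) := fun s t h =>
  inter_subset_inter (closure_mono (inter_subset_inter_left _ h))
    (closure_mono (inter_subset_inter_left _ h))

lemma derivBFT_isClosed (S : Set X) : IsClosed (derivBFT ψ p q S) :=
  isClosed_closure.inter isClosed_closure

lemma dItBFT_isClosed {D : Set X → Set X} (hDc : ∀ S, IsClosed (D S)) (a : Ordinal.{u}) :
    IsClosed (dItBFT D a) := by
  rw [dItBFT]
  exact isClosed_iInter fun b => hDc _

lemma dItBFT_succ {D : Set X → Set X} (hD : Monotone D) (a : Ordinal.{u}) :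
    dItBFT D (a + 1) = D (dItBFT D a) := by
  apply Subset.antisymm
  · intro x hx
    exact mem_dItBFT.1 hx a (by rw [Ordinal.add_one_eq_succ]; exact Order.lt_succ a)
  · intro x hx
    refine mem_dItBFT.2 fun b hb => ?_
    have hba : b ≤ a := by
      rwa [Ordinal.add_one_eq_succ, Order.lt_succ_iff] at hb
    exact hD (dItBFT_anti hba) hx


lemma fsigma_sandwich (hb : BarelyBFT ψ p q) :
    ∃ S : Set X, IsFsigmaBFT S ∧ {x | q ≤ ψ x} ⊆ S ∧ S ⊆ {x | p < ψ x} := by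
  set D := derivBFT ψ p q with hD
  set d := dItBFT (X := X) D with hd
  have hDc : ∀ S : Set X, IsClosed (D S) := fun S => by
    rw [hD]; exact derivBFT_isClosed S
  have hDm : Monotone D := by rw [hD]; exact derivBFT_mono
  -- stabilization at the empty set
  have hstab : ∃ a₀ : Ordinal.{u}, d a₀ = ∅ := by
    have hninj := Cardinal.not_injective_limitation_set (α := Set X) d
    rw [Set.InjOn] at hninj
    push_neg at hninj
    obtain ⟨a, ha, b, hbmem, hab, hne⟩ := hninj
    wlog hlt : a < b generalizing a b
    · exact this b hbmem a ha hab.symm (Ne.symm hne) ((Ne.lt_or_gt hne).resolve_left hlt)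
    have hsucc : d (a + 1) = d a := by
      apply Subset.antisymm (dItBFT_anti (le_self_add (a := a) (b := 1)))
      calc d a = d b := hab
        _ ⊆ d (a + 1) := dItBFT_anti (by rwa [Ordinal.add_one_eq_succ, Order.succ_le_iff])
    have hfix : D (d a) = d a := by
      nth_rewrite 2 [← hsucc]
      rw [hd]
      exact (dItBFT_succ hDm a).symm
    refine ⟨a, by_contra fun hne' => ?_⟩
    have hne'' : (d a).Nonempty := nonempty_iff_ne_empty.2 hne'
    exact hb (d a) (dItBFT_isClosed hDc a) hne''
      (by intro x hx
          rw [← hfix, hD] at hx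
          exact hx.1)
      (by intro x hx
          rw [← hfix, hD] at hx
          exact hx.2)
  obtain ⟨a₀, ha₀⟩ := hstab
  -- exit lemma
  have hexit : ∀ x : X, ∃ b, x ∈ d b ∧ x ∉ D (d b) := by
    intro x
    have hx₀ : x ∉ d a₀ := by rw [ha₀]; exact notMem_empty x
    have hne : {a : Ordinal.{u} | x ∉ d a}.Nonempty := ⟨a₀, hx₀⟩
    set a₁ := Ordinal.lt_wf.min _ hne with ha₁
    have hmem : x ∉ d a₁ := Ordinal.lt_wf.min_mem _ hne
    have hmin : ∀ b < a₁, x ∈ d b := fun b hb =>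
      by_contra fun hxb => Ordinal.lt_wf.not_lt_min _ hxb hb
    have : ¬ ∀ b < a₁, x ∈ D (d b) := fun h => hmem (mem_dItBFT.2 h)
    push_neg at this
    obtain ⟨b, hb, hxb⟩ := this
    exact ⟨b, hmin b hb, hxb⟩
  -- pieces
  set piece : Ordinal.{u} → Set X := fun b => d b ∩ (closure (d b ∩ {x | ψ x ≤ p}))ᶜ
    with hpiece
  set Bad : Set Ordinal.{u} := {b | (d b \ D (d b)).Nonempty} with hBad
  set S := ⋃ b ∈ Bad, piece b with hS
  have hqS : {x | q ≤ ψ x} ⊆ S := by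
    intro x hx
    obtain ⟨b, hxb, hxD⟩ := hexit x
    have hx2 : x ∈ closure (d b ∩ {x | q ≤ ψ x}) := subset_closure ⟨hxb, hx⟩
    have hx1 : x ∉ closure (d b ∩ {x | ψ x ≤ p}) := fun h => hxD ⟨h, hx2⟩
    exact mem_biUnion ⟨x, hxb, hxD⟩ ⟨hxb, hx1⟩
  have hSp : S ⊆ {x | p < ψ x} := by
    rintro x hx
    simp only [hS, mem_iUnion] at hx
    obtain ⟨b, _, hxb, hxcl⟩ := hx
    by_contra hpx
    exact hxcl (subset_closure ⟨hxb, show ψ x ≤ p from le_of_not_gt hpx⟩)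
  -- countability of Bad
  obtain ⟨B, hBcount, -, hBbasis⟩ := TopologicalSpace.exists_countable_basis X
  have hBadc : Bad.Countable := by
    have hchoice : ∀ b ∈ Bad, ∃ u ∈ B, (u ∩ d b).Nonempty ∧ u ∩ D (d b) = ∅ := by
      rintro b ⟨x, hxb, hxD⟩
      obtain ⟨u, huB, hxu, husub⟩ := hBbasis.exists_subset_of_mem_open
        (show x ∈ (D (d b))ᶜ from hxD) (derivBFT_isClosed _).isOpen_compl
      exact ⟨u, huB, ⟨x, hxu, hxb⟩, eq_empty_of_subset_empty
        (fun y ⟨hyu, hyD⟩ => husub hyu hyD)⟩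
    choose! u huB hune hudisj using hchoice
    apply countable_of_injective_of_countable_image
      (f := u) ?_ (hBcount.mono (image_subset_iff.2 fun b hb => huB b hb))
    have key : ∀ b c, b ∈ Bad → c ∈ Bad → b < c → u b ≠ u c := by
      intro b c hbB hcB hlt hbc
      have hsub : d c ⊆ D (d b) := by
        have h1 : d c ⊆ d (b + 1) :=
          dItBFT_anti (by rwa [Ordinal.add_one_eq_succ, Order.succ_le_iff])
        have h2 : dItBFT D (b + 1) = D (dItBFT D b) := dItBFT_succ hDm b
        rw [hd]
        rw [hd] at h1
        exact h2 ▸ h1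
      obtain ⟨y, hyu, hyd⟩ := hune c hcB
      have hy : y ∈ u b ∩ D (d b) := ⟨hbc ▸ hyu, hsub hyd⟩
      rw [hudisj b hbB] at hy
      exact hy
    intro b hbB c hcB hbc
    by_contra hne
    rcases lt_or_gt_of_ne hne with h | h
    · exact key b c hbB hcB h hbc
    · exact key c b hcB hbB h hbc.symm
  -- S is F_sigma
  refine ⟨S, ?_, hqS, hSp⟩
  rcases Bad.eq_empty_or_nonempty with hBe | hBne
  · rw [hS, hBe]
    simpa using isFsigmaBFT_empty
  · obtain ⟨f, hf⟩ := hBadc.exists_eq_range hBne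
    have : S = ⋃ n, piece (f n) := by rw [hS, hf, biUnion_range]
    rw [this]
    exact IsFsigmaBFT.iUnion fun n =>
      isFsigmaBFT_inter_open (dItBFT_isClosed hDc _) isClosed_closure.isOpen_compl
end L2x


section L1
variable [MetricSpace X] [CompleteSpace X]

lemma barely_of_seq {A : Set C(X, ℝ)} {ψ : X → ℝ}
    (happrox : ∀ (S : Finset X) (ε : ℝ), 0 < ε → ∃ f ∈ A, ∀ x ∈ S, |f x - ψ x| < ε)
    (hseq : ∀ u : ℕ → C(X, ℝ), (∀ n, u n ∈ A) → ∃ φ : ℕ → ℕ, StrictMono φ ∧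
      ∃ ψ' : X → ℝ, ∀ x, Tendsto (fun k => u (φ k) x) atTop (𝓝 (ψ' x)))
    {p q : ℝ} (hpq : p < q) : BarelyBFT ψ p q := by
  classical
  intro F hFc hFne hd1 hd2
  set ε := (q - p) / 3 with hε_def
  have hε : 0 < ε := by rw [hε_def]; linarith
  set r₁ := p + ε with hr₁
  set r₂ := q - ε with hr₂
  have hr : r₁ < r₂ := by rw [hr₁, hr₂, hε_def]; linarith
  have hdense : ∀ U : Set X, IsOpen U → (F ∩ U).Nonempty →
      (∃ a, (a ∈ F ∩ U) ∧ ψ a ≤ p) ∧ (∃ b, (b ∈ F ∩ U) ∧ q ≤ ψ b) := by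
    rintro U hUo ⟨x, hxF, hxU⟩
    constructor
    · rcases mem_closure_iff_nhds.1 (hd1 hxF) U (hUo.mem_nhds hxU) with ⟨a, haU, haF, hap⟩
      exact ⟨a, ⟨haF, haU⟩, hap⟩
    · rcases mem_closure_iff_nhds.1 (hd2 hxF) U (hUo.mem_nhds hxU) with ⟨b, hbU, hbF, hbq⟩
      exact ⟨b, ⟨hbF, hbU⟩, hbq⟩
  -- one construction step
  have step : ∀ (n : ℕ) (U : (Fin n → Bool) → Set X),
      (∀ s, IsOpen (U s) ∧ (F ∩ U s).Nonempty) →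
      ∃ (f : C(X, ℝ)) (U' : (Fin (n + 1) → Bool) → Set X),
        f ∈ A ∧ (∀ t, IsOpen (U' t) ∧ (F ∩ U' t).Nonempty) ∧
        (∀ t, closure (F ∩ U' t) ⊆ F ∩ U (fun i => t i.castSucc)) ∧
        (∀ t, ∀ x ∈ U' t, ∀ y ∈ U' t, dist x y ≤ (1 / 2) ^ n) ∧
        (∀ t, ∀ x ∈ F ∩ U' t, if t (Fin.last n) then r₂ < f x else f x < r₁) := by
    intro n U hU
    have hA' : ∀ s : Fin n → Bool, ∃ a, (a ∈ F ∩ U s) ∧ ψ a ≤ p :=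
      fun s => (hdense (U s) (hU s).1 (hU s).2).1
    have hB' : ∀ s : Fin n → Bool, ∃ b, (b ∈ F ∩ U s) ∧ q ≤ ψ b :=
      fun s => (hdense (U s) (hU s).1 (hU s).2).2
    choose a haFU hap using hA'
    choose b hbFU hbq using hB'
    obtain ⟨f, hfA, hf⟩ := happrox ((Finset.univ.image a) ∪ (Finset.univ.image b)) ε hε
    have hfa : ∀ s, f (a s) < r₁ := by
      intro s
      have hmem : a s ∈ (Finset.univ.image a) ∪ (Finset.univ.image b) := by
        exact Finset.mem_union_left _ (Finset.mem_image_of_mem a (Finset.mem_univ s))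
      have h := abs_lt.1 (hf (a s) hmem)
      have := hap s
      rw [hr₁]; linarith [h.2]
    have hfb : ∀ s, r₂ < f (b s) := by
      intro s
      have hmem : b s ∈ (Finset.univ.image a) ∪ (Finset.univ.image b) := by
        exact Finset.mem_union_right _ (Finset.mem_image_of_mem b (Finset.mem_univ s))
      have h := abs_lt.1 (hf (b s) hmem)
      have := hbq s
      rw [hr₂]; linarith [h.1]
    -- centers
    set c : (Fin (n + 1) → Bool) → X := fun t =>
      if t (Fin.last n) then b (fun i => t i.castSucc) else a (fun i => t i.castSucc) with hc
    have hcFU : ∀ t, c t ∈ F ∩ U (fun i => t i.castSucc) := by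
      intro t; rw [hc]
      by_cases ht : t (Fin.last n) = true
      · simp only [ht, if_true]; exact hbFU _
      · simp only [Bool.not_eq_true] at ht; simp only [ht]; simpa using haFU _
    have hδ' : ∀ t : Fin (n + 1) → Bool, ∃ δ, 0 < δ ∧ ball (c t) δ ⊆ U (fun i => t i.castSucc) :=
      fun t => Metric.isOpen_iff.1 (hU _).1 _ (hcFU t).2
    choose δ hδ0 hδsub using hδ'
    set M : (Fin (n + 1) → Bool) → Set X := fun t =>
      if t (Fin.last n) then {x | r₂ < f x} else {x | f x < r₁} with hM
    have hMopen : ∀ t, IsOpen (M t) := by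
      intro t; rw [hM]
      by_cases ht : t (Fin.last n) = true
      · simp only [ht, if_true]; exact isOpen_lt continuous_const (map_continuous f)
      · simp only [Bool.not_eq_true] at ht; simp only [ht, Bool.false_eq_true, if_false]
        exact isOpen_lt (map_continuous f) continuous_const
    have hcM : ∀ t, c t ∈ M t := by
      intro t; rw [hM, hc]
      by_cases ht : t (Fin.last n) = true
      · simp only [ht, if_true]; exact hfb _
      · simp only [Bool.not_eq_true] at ht; simp only [ht, Bool.false_eq_true, if_false]
        exact hfa _
    set ρ : (Fin (n + 1) → Bool) → ℝ := fun t => min (δ t / 2) ((1 / 2) ^ (n + 1)) with hρ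
    have hρ0 : ∀ t, 0 < ρ t := fun t => lt_min (by linarith [hδ0 t]) (by positivity)
    refine ⟨f, fun t => U (fun i => t i.castSucc) ∩ M t ∩ ball (c t) (ρ t), hfA, ?_, ?_, ?_, ?_⟩
    · intro t
      refine ⟨((hU _).1.inter (hMopen t)).inter isOpen_ball, ⟨c t, (hcFU t).1,
        ⟨⟨(hcFU t).2, hcM t⟩, mem_ball_self (hρ0 t)⟩⟩⟩
    · intro t x hx
      have hxF : x ∈ F := by
        have : closure (F ∩ (U (fun i => t i.castSucc) ∩ M t ∩ ball (c t) (ρ t))) ⊆ closure F :=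
          closure_mono inter_subset_left
        exact hFc.closure_subset (this hx)
      have hxcb : x ∈ closedBall (c t) (ρ t) := by
        have h1 : closure (F ∩ (U (fun i => t i.castSucc) ∩ M t ∩ ball (c t) (ρ t))) ⊆
            closure (ball (c t) (ρ t)) :=
          closure_mono (fun y hy => hy.2.2)
        exact Metric.closure_ball_subset_closedBall (h1 hx)
      refine ⟨hxF, hδsub t ?_⟩
      have : dist x (c t) ≤ ρ t := Metric.mem_closedBall.1 hxcb
      have hρδ : ρ t ≤ δ t / 2 := min_le_left _ _
      exact Metric.mem_ball.2 (by linarith [hδ0 t])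
    · intro t x hx y hy
      have hx' : dist x (c t) < ρ t := Metric.mem_ball.1 hx.2
      have hy' : dist y (c t) < ρ t := Metric.mem_ball.1 hy.2
      have hρ2 : ρ t ≤ (1 / 2) ^ (n + 1) := min_le_right _ _
      have hpow : (2 : ℝ) * (1 / 2) ^ (n + 1) = (1 / 2) ^ n := by
        rw [pow_succ]; ring
      calc dist x y ≤ dist x (c t) + dist (c t) y := dist_triangle _ _ _
        _ ≤ ρ t + ρ t := by rw [dist_comm (c t) y]; linarith
        _ ≤ (1 / 2) ^ n := by linarith
    · intro t x hx
      have hxM := hx.2.1.2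
      by_cases ht : t (Fin.last n) = true
      · rw [if_pos ht]
        simp only [hM, ht, if_true] at hxM
        exact hxM
      · rw [if_neg ht]
        simp only [hM, ht, if_false] at hxM
        exact hxM
  choose stepf stepU hsA hsP hsCl hsD hsV using step
  let Sys : (n : ℕ) → Σ' (U : (Fin n → Bool) → Set X), ∀ s, IsOpen (U s) ∧ (F ∩ U s).Nonempty :=
    fun n => Nat.rec ⟨fun _ => Set.univ, fun _ => ⟨isOpen_univ, by simpa using hFne⟩⟩
      (fun m ih => ⟨stepU m ih.1 ih.2, hsP m ih.1 ih.2⟩) n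
  let W : (n : ℕ) → (Fin n → Bool) → Set X := fun n => (Sys n).1
  let fseq : ℕ → C(X, ℝ) := fun n => stepf n (W n) (Sys n).2
  have hfAseq : ∀ n, fseq n ∈ A := fun n => hsA n (W n) (Sys n).2
  obtain ⟨φ, hφ, ψ', hψ'⟩ := hseq fseq hfAseq
  set α : ℕ → Bool := fun m => decide (∃ j, φ j = m ∧ Odd j) with hα
  have hαφ : ∀ j, α (φ j) = true ↔ Odd j := by
    intro j; rw [hα]; simp only [decide_eq_true_eq]
    constructor
    · rintro ⟨j', hj', hodd⟩; rwa [← hφ.injective hj']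
    · intro h; exact ⟨j, rfl, h⟩
  set V : ℕ → Set X := fun n => F ∩ W n (fun i => α i) with hV
  have hVne : ∀ n, (V n).Nonempty := fun n => ((Sys n).2 _).2
  have hVnest : ∀ n, closure (V (n + 1)) ⊆ V n := by
    intro n
    have h := hsCl n (W n) (Sys n).2 (fun i : Fin (n + 1) => α i)
    have harg : (fun i : Fin n => α ((Fin.castSucc i) : Fin (n + 1)).val) =
        (fun i : Fin n => α i.val) := by
      funext i; rfl
    exact h
  have hVmono : ∀ k n, V (n + k) ⊆ V n := by
    intro k
    induction k with
    | zero => intro n; exact fun x hx => hx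
    | succ m ih => intro n
                   intro x hx
                   exact ih n (hVnest (n + m) (subset_closure hx))
  have hVmono' : ∀ {m n}, n ≤ m → V m ⊆ V n := by
    intro m n h
    obtain ⟨k, rfl⟩ := Nat.exists_eq_add_of_le h
    exact hVmono k n
  have hVdiam : ∀ n, ∀ x ∈ V (n + 1), ∀ y ∈ V (n + 1), dist x y ≤ (1 / 2) ^ n := by
    intro n x hx y hy
    exact hsD n (W n) (Sys n).2 (fun i : Fin (n + 1) => α i) x hx.2 y hy.2
  choose cc hcc using hVne
  have hCauchy : CauchySeq (fun k => cc (k + 1)) := by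
    apply cauchySeq_of_le_geometric (1 / 2) 1 (by norm_num)
    intro n
    have h1 : cc (n + 1) ∈ V (n + 1) := hcc (n + 1)
    have h2 : cc (n + 2) ∈ V (n + 1) := hVmono' (by omega) (hcc (n + 2))
    simpa using hVdiam n _ h1 _ h2
  obtain ⟨xl, hxl⟩ := cauchySeq_tendsto_of_complete hCauchy
  have hxlV : ∀ n, xl ∈ V n := by
    intro n
    apply hVnest n
    apply mem_closure_of_tendsto hxl
    filter_upwards [Filter.eventually_ge_atTop n] with k hk
    exact hVmono' (by omega) (hcc (k + 1))
  have hval : ∀ n, if α n then r₂ < fseq n xl else fseq n xl < r₁ := by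
    intro n
    exact hsV n (W n) (Sys n).2 (fun i : Fin (n + 1) => α i) xl (hxlV (n + 1))
  have heven : Tendsto (fun i => fseq (φ (2 * i)) xl) atTop (𝓝 (ψ' xl)) :=
    (hψ' xl).comp (tendsto_atTop_atTop.2 fun b => ⟨b, fun a ha => by omega⟩)
  have hodd : Tendsto (fun i => fseq (φ (2 * i + 1)) xl) atTop (𝓝 (ψ' xl)) :=
    (hψ' xl).comp (tendsto_atTop_atTop.2 fun b => ⟨b, fun a ha => by omega⟩)
  have h1 : ψ' xl ≤ r₁ := by
    apply le_of_tendsto heven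
    apply Eventually.of_forall
    intro i
    have h := hval (φ (2 * i))
    rw [if_neg] at h
    · exact le_of_lt h
    · intro hcon
      have : Odd (2 * i) := (hαφ (2 * i)).1 hcon
      rw [Nat.odd_iff] at this
      omega
  have h2 : r₂ ≤ ψ' xl := by
    apply ge_of_tendsto hodd
    apply Eventually.of_forall
    intro i
    have h := hval (φ (2 * i + 1))
    rw [if_pos] at h
    · exact le_of_lt h
    · exact (hαφ (2 * i + 1)).2 (by simp [Nat.odd_iff])
  linarith
end L1


section L3
variable [MetricSpace X]

lemma urysohn_combo (k : ℕ) (C : ℕ → Set X) (hC : ∀ m, IsClosed (C m))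
    (hdisj : ∀ m m', m ≠ m' → C m ∩ C m' = ∅) (v : ℕ → ℝ) :
    ∃ h : C(X, ℝ), ∀ m ≤ k, ∀ x ∈ C m, h x = v m := by
  classical
  have hg : ∀ m : ℕ, ∃ g : C(X, ℝ),
      EqOn g 0 (⋃ j ∈ (Finset.range (k + 1)).erase m, C j) ∧ EqOn g 1 (C m) := by
    intro m
    have hcl : IsClosed (⋃ j ∈ (Finset.range (k + 1)).erase m, C j) :=
      ((Finset.range (k + 1)).erase m).finite_toSet.isClosed_biUnion fun j _ => hC j
    have hdis : Disjoint (⋃ j ∈ (Finset.range (k + 1)).erase m, C j) (C m) := by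
      rw [disjoint_left]
      rintro x hx hxm
      rcases mem_iUnion₂.1 hx with ⟨j, hj, hxj⟩
      have hne : j ≠ m := (Finset.mem_erase.1 hj).1
      have hmem : x ∈ C j ∩ C m := ⟨hxj, hxm⟩
      rw [hdisj j m hne] at hmem
      exact hmem
    obtain ⟨g, hg0, hg1, -⟩ := exists_continuous_zero_one_of_isClosed hcl (hC m) hdis
    exact ⟨g, hg0, hg1⟩
  choose g hg0 hg1 using hg
  refine ⟨∑ m ∈ Finset.range (k + 1), v m • g m, ?_⟩
  intro m hm x hx
  rw [ContinuousMap.coe_sum, Finset.sum_apply]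
  rw [Finset.sum_eq_single m]
  · simp only [ContinuousMap.coe_smul, Pi.smul_apply, smul_eq_mul]
    rw [hg1 m hx]
    simp
  · intro j hj hjm
    simp only [ContinuousMap.coe_smul, Pi.smul_apply, smul_eq_mul]
    have hx0 : x ∈ ⋃ i ∈ (Finset.range (k + 1)).erase j, C i :=
      mem_iUnion₂.2 ⟨m, Finset.mem_erase.2 ⟨fun h => hjm h.symm, Finset.mem_range.2 (by omega)⟩, hx⟩
    rw [hg0 j hx0]
    simp
  · intro hm'
    exact absurd (Finset.mem_range.2 (by omega)) hm'

lemma level_approx {ψ : X → ℝ}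
    (hF : ∀ a b : ℝ, a < b → IsFsigmaBFT {x | a < ψ x ∧ ψ x < b})
    {δ : ℝ} (hδ : 0 < δ) :
    ∃ f : X → ℝ, (∀ x, |f x - ψ x| ≤ δ) ∧
      ∃ h : ℕ → C(X, ℝ), ∀ x, ∀ᶠ k in atTop, (h k) x = f x := by
  classical
  obtain ⟨qe, hqe⟩ := exists_surjective_nat ℚ
  set Aset : ℕ → Set X := fun i => {x | (qe i : ℝ) - δ < ψ x ∧ ψ x < qe i + δ} with hAset
  have hAF : ∀ i, IsFsigmaBFT (Aset i) := fun i => hF _ _ (by linarith)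
  have hcover : ∀ x, ∃ i, x ∈ Aset i := by
    intro x
    obtain ⟨r, hr1, hr2⟩ := exists_rat_btwn (show ψ x - δ < ψ x by linarith)
    obtain ⟨i, rfl⟩ := hqe r
    exact ⟨i, ⟨by linarith, by linarith⟩⟩
  choose Fc hFcl hFeq using hAF
  set G : ℕ → Set X := fun m => Fc (Nat.pairEquiv.symm m).1 (Nat.pairEquiv.symm m).2 with hG
  have hGcl : ∀ m, IsClosed (G m) := fun m => hFcl _ _
  have hGsub : ∀ m, G m ⊆ Aset (Nat.pairEquiv.symm m).1 := by
    intro m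
    simp only [hG]
    rw [hFeq]
    exact subset_iUnion _ _
  have hGcover : ∀ x, ∃ m, x ∈ G m := by
    intro x
    obtain ⟨i, hi⟩ := hcover x
    rw [hFeq i] at hi
    obtain ⟨k, hk⟩ := mem_iUnion.1 hi
    refine ⟨Nat.pairEquiv (i, k), ?_⟩
    rw [hG]
    simp only [Equiv.symm_apply_apply]
    exact hk
  set mdx : X → ℕ := fun x => Nat.find (hGcover x) with hmdx
  set v : ℕ → ℝ := fun m => ((qe (Nat.pairEquiv.symm m).1 : ℚ) : ℝ) with hv
  set f : X → ℝ := fun x => v (mdx x) with hf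
  have hfψ : ∀ x, |f x - ψ x| ≤ δ := by
    intro x
    have hx : x ∈ G (mdx x) := Nat.find_spec (hGcover x)
    have h2 := hGsub _ hx
    rw [abs_le]
    constructor
    · linarith [h2.2]
    · linarith [h2.1]
  set Uprev : ℕ → Set X := fun m => ⋃ m' ∈ Finset.range m, G m' with hUprev
  have hUprevcl : ∀ m, IsClosed (Uprev m) :=
    fun m => (Finset.range m).finite_toSet.isClosed_biUnion fun j _ => hGcl j
  set CC : ℕ → ℕ → Set X := fun m n =>
    G m ∩ (Metric.thickening (1 / (n + 1)) (Uprev m))ᶜ with hCC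
  have hCCcl : ∀ m n, IsClosed (CC m n) :=
    fun m n => (hGcl m).inter Metric.isOpen_thickening.isClosed_compl
  have hCCG : ∀ m n m', m' < m → CC m n ∩ G m' = ∅ := by
    intro m n m' hm'
    apply eq_empty_of_subset_empty
    rintro x ⟨⟨-, hxth⟩, hxG⟩
    exact hxth (Metric.self_subset_thickening (by positivity) _
      (mem_iUnion₂.2 ⟨m', Finset.mem_range.2 hm', hxG⟩))
  have hCCdisj : ∀ n m m', m ≠ m' → CC m n ∩ CC m' n = ∅ := by
    intro n m m' hne
    rcases lt_or_gt_of_ne hne with h | h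
    · apply eq_empty_of_subset_empty
      rintro x ⟨hx1, hx2⟩
      have hmem : x ∈ CC m' n ∩ G m := ⟨hx2, hx1.1⟩
      rw [hCCG m' n m h] at hmem
      exact hmem
    · apply eq_empty_of_subset_empty
      rintro x ⟨hx1, hx2⟩
      have hmem : x ∈ CC m n ∩ G m' := ⟨hx1, hx2.1⟩
      rw [hCCG m n m' h] at hmem
      exact hmem
  have hCCmono : ∀ m n n', n ≤ n' → CC m n ⊆ CC m n' := by
    intro m n n' hnn'
    apply inter_subset_inter_right
    apply compl_subset_compl.2
    apply Metric.thickening_mono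
    have h1 : (0:ℝ) < n + 1 := by positivity
    have h2 : (n:ℝ) + 1 ≤ (n':ℝ) + 1 := by exact_mod_cast by omega
    exact div_le_div_of_nonneg_left (by norm_num) h1 h2 |>.trans_eq rfl
  have hCCex : ∀ x, ∃ n, x ∈ CC (mdx x) n := by
    intro x
    have hx : x ∈ G (mdx x) := Nat.find_spec (hGcover x)
    have hxU : x ∉ Uprev (mdx x) := by
      intro hxu
      rcases mem_iUnion₂.1 hxu with ⟨m', hm', hxm'⟩
      exact Nat.find_min (hGcover x) (Finset.mem_range.1 hm') hxm'
    rcases Metric.isOpen_iff.1 (hUprevcl (mdx x)).isOpen_compl x hxU with ⟨ε, hε, hball⟩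
    rcases exists_nat_one_div_lt hε with ⟨n, hn⟩
    refine ⟨n, hx, fun hth => ?_⟩
    rcases Metric.mem_thickening_iff.1 hth with ⟨z, hz, hdz⟩
    have : z ∈ (Uprev (mdx x))ᶜ := hball (by
      rw [Metric.mem_ball, dist_comm]
      exact hdz.trans hn)
    exact this hz
  have hcombo : ∀ k, ∃ h : C(X, ℝ), ∀ m ≤ k, ∀ x ∈ CC m k, h x = v m :=
    fun k => urysohn_combo k (fun m => CC m k) (fun m => hCCcl m k)
      (fun m m' h => hCCdisj k m m' h) v
  choose hfun hfunspec using hcombo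
  refine ⟨f, hfψ, hfun, ?_⟩
  intro x
  obtain ⟨n₀, hn₀⟩ := hCCex x
  filter_upwards [eventually_ge_atTop (max (mdx x) n₀)] with k hk
  have h1 : x ∈ CC (mdx x) k := hCCmono _ n₀ k (le_trans (le_max_right _ _) hk) hn₀
  exact hfunspec k (mdx x) (le_trans (le_max_left _ _) hk) x h1
end L3

section L3b
variable [MetricSpace X]

lemma trunc_eq {c t : ℝ} (h : |t| ≤ c) : max (-c) (min c t) = t := by
  rcases abs_le.1 h with ⟨h1, h2⟩
  rw [min_eq_right h2, max_eq_right h1]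

lemma trunc_abs_le {c t : ℝ} (hc : 0 ≤ c) : |max (-c) (min c t)| ≤ c := by
  rw [abs_le]
  constructor
  · exact le_max_left _ _
  · exact max_le (by linarith) (min_le_left _ _)

lemma baire_one_of_fsigma {ψ : X → ℝ}
    (hF : ∀ a b : ℝ, a < b → IsFsigmaBFT {x | a < ψ x ∧ ψ x < b}) :
    ∃ g : ℕ → X → ℝ, (∀ n, Continuous (g n)) ∧
      ∀ x, Tendsto (fun n => g n x) atTop (𝓝 (ψ x)) := by
  classical
  have hlev : ∀ n : ℕ, ∃ f : X → ℝ, (∀ x, |f x - ψ x| ≤ (1 / 2) ^ n) ∧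
      ∃ h : ℕ → C(X, ℝ), ∀ x, ∀ᶠ k in atTop, (h k) x = f x :=
    fun n => level_approx hF (by positivity)
  choose Fl hFl hfun hfunspec using hlev
  -- differences
  set d : ℕ → X → ℝ := fun n x => match n with
    | 0 => Fl 0 x
    | (m + 1) => Fl (m + 1) x - Fl m x
    with hd
  have htel : ∀ N x, ∑ n ∈ Finset.range (N + 1), d n x = Fl N x := by
    intro N x
    induction N with
    | zero => simp [hd]
    | succ m ih => rw [Finset.sum_range_succ, ih]; simp [hd]
  have hdbd : ∀ m x, |d (m + 1) x| ≤ 3 * (1 / 2) ^ (m + 1) := by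
    intro m x
    have h1 := hFl (m + 1) x
    have h2 := hFl m x
    have : (1 / 2 : ℝ) ^ m = 2 * (1 / 2) ^ (m + 1) := by rw [pow_succ]; ring
    calc |d (m + 1) x| = |(Fl (m + 1) x - ψ x) - (Fl m x - ψ x)| := by rw [hd]; ring_nf
      _ ≤ |Fl (m + 1) x - ψ x| + |Fl m x - ψ x| := abs_sub _ _
      _ ≤ (1 / 2) ^ (m + 1) + (1 / 2) ^ m := add_le_add h1 h2
      _ = 3 * (1 / 2) ^ (m + 1) := by rw [this]; ring
  -- truncated stage approximants
  set b : ℕ → ℝ := fun n => 3 * (1 / 2) ^ n with hb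
  set H : ℕ → ℕ → C(X, ℝ) := fun n k => match n with
    | 0 => hfun 0 k
    | (m + 1) => ⟨fun x => max (-(b (m + 1))) (min (b (m + 1)) ((hfun (m + 1) k) x - (hfun m k) x)),
        (continuous_const.max (continuous_const.min
          ((map_continuous (hfun (m + 1) k)).sub (map_continuous (hfun m k)))))⟩
    with hH
  have hHbd : ∀ m k x, |(H (m + 1) k) x| ≤ b (m + 1) := by
    intro m k x
    have : (H (m + 1) k) x = max (-(b (m + 1))) (min (b (m + 1))
        ((hfun (m + 1) k) x - (hfun m k) x)) := rfl
    rw [this]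
    exact trunc_abs_le (by rw [hb]; positivity)
  have hHeq : ∀ n x, ∀ᶠ k in atTop, (H n k) x = d n x := by
    intro n x
    match n with
    | 0 =>
      filter_upwards [hfunspec 0 x] with k hk
      exact hk
    | (m + 1) =>
      filter_upwards [hfunspec (m + 1) x, hfunspec m x] with k h1 h2
      have : (H (m + 1) k) x = max (-(b (m + 1))) (min (b (m + 1))
          ((hfun (m + 1) k) x - (hfun m k) x)) := rfl
      rw [this, h1, h2]
      exact trunc_eq (hdbd m x)
  refine ⟨fun k x => ∑ n ∈ Finset.range (k + 1), (H n k) x, ?_, ?_⟩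
  · intro k
    exact continuous_finset_sum _ fun n _ => map_continuous (H n k)
  · intro x
    rw [Metric.tendsto_atTop]
    intro ε hε
    obtain ⟨N, hN⟩ := exists_pow_lt_of_lt_one (show (0:ℝ) < ε / 4 by linarith)
      (show (1/2 : ℝ) < 1 by norm_num)
    have hev : ∀ᶠ k in atTop, ∀ n ∈ Finset.range (N + 1), (H n k) x = d n x :=
      (eventually_all_finset _).2 fun n _ => hHeq n x
    obtain ⟨K, hK⟩ := eventually_atTop.1 hev
    refine ⟨max N K, fun k hk => ?_⟩
    have hkN : N ≤ k := le_trans (le_max_left _ _) hk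
    have hkK : K ≤ k := le_trans (le_max_right _ _) hk
    have hsplit : ∑ n ∈ Finset.range (k + 1), (H n k) x =
        ∑ n ∈ Finset.range (N + 1), (H n k) x + ∑ n ∈ Finset.Ico (N + 1) (k + 1), (H n k) x := by
      rw [Finset.range_eq_Ico, Finset.range_eq_Ico]
      exact (Finset.sum_Ico_consecutive (fun n => (H n k) x) (m := 0) (n := N + 1) (k := k + 1) (Nat.zero_le _) (by omega)).symm
    have hhead : ∑ n ∈ Finset.range (N + 1), (H n k) x = Fl N x := by
      rw [Finset.sum_congr rfl fun n hn => hK k hkK n hn]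
      exact htel N x
    have htail : |∑ n ∈ Finset.Ico (N + 1) (k + 1), (H n k) x| ≤ 3 * (1 / 2) ^ N := by
      calc |∑ n ∈ Finset.Ico (N + 1) (k + 1), (H n k) x|
          ≤ ∑ n ∈ Finset.Ico (N + 1) (k + 1), |(H n k) x| := Finset.abs_sum_le_sum_abs _ _
        _ ≤ ∑ n ∈ Finset.Ico (N + 1) (k + 1), 3 * (1 / 2) ^ n := by
            apply Finset.sum_le_sum
            intro n hn
            have hn1 : 1 ≤ n := by
              have := (Finset.mem_Ico.1 hn).1
              omega
            obtain ⟨m, rfl⟩ : ∃ m, n = m + 1 := ⟨n - 1, by omega⟩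
            simpa [hb] using hHbd m k x
        _ = 3 * ∑ n ∈ Finset.Ico (N + 1) (k + 1), (1 / 2 : ℝ) ^ n := by
            rw [Finset.mul_sum]
        _ ≤ 3 * (1 / 2) ^ N := by
            have hgeom := geom_sum_Ico' (show (1/2 : ℝ) ≠ 1 by norm_num)
              (show N + 1 ≤ k + 1 by omega)
            rw [hgeom]
            have e : ((1/2:ℝ) ^ (N+1) - (1/2) ^ (k+1)) / (1 - 1/2) =
                2 * ((1/2) ^ (N+1) - (1/2) ^ (k+1)) := by
              rw [show (1:ℝ) - 1/2 = 1/2 by norm_num,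
                div_eq_iff (by norm_num : (1/2:ℝ) ≠ 0)]
              ring
            rw [e]
            have h1 : (0:ℝ) ≤ (1/2:ℝ) ^ (k+1) := by positivity
            have h2 : (1/2:ℝ) ^ (N+1) = (1/2) ^ N / 2 := by rw [pow_succ]; ring
            linarith
    rw [Real.dist_eq]
    show |(∑ n ∈ Finset.range (k + 1), (H n k) x) - ψ x| < ε
    rw [hsplit, hhead]
    have h1 : |Fl N x - ψ x| ≤ (1/2) ^ N := hFl N x
    calc |Fl N x + (∑ n ∈ Finset.Ico (N + 1) (k + 1), (H n k) x) - ψ x|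
        ≤ |Fl N x - ψ x| + |∑ n ∈ Finset.Ico (N + 1) (k + 1), (H n k) x| := by
          have := abs_add_le (Fl N x - ψ x) (∑ n ∈ Finset.Ico (N + 1) (k + 1), (H n k) x)
          calc |Fl N x + (∑ n ∈ Finset.Ico (N + 1) (k + 1), (H n k) x) - ψ x|
              = |(Fl N x - ψ x) + ∑ n ∈ Finset.Ico (N + 1) (k + 1), (H n k) x| := by ring_nf
            _ ≤ _ := this
      _ ≤ (1/2) ^ N + 3 * (1/2) ^ N := add_le_add h1 htail
      _ = 4 * (1/2) ^ N := by ring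
      _ < ε := by linarith
end L3b


section Ray
variable [MetricSpace X] [SecondCountableTopology X]

lemma fsigma_ray {ψ : X → ℝ} (hbar : ∀ p q : ℝ, p < q → BarelyBFT ψ p q) (r : ℝ) :
    IsFsigmaBFT {x | r < ψ x} := by
  have h : ∀ n : ℕ, ∃ S : Set X, IsFsigmaBFT S ∧
      {x | r + 1 / (n + 1) ≤ ψ x} ⊆ S ∧ S ⊆ {x | r + 1 / (2 * (n + 1)) < ψ x} := by
    intro n
    apply fsigma_sandwich
    apply hbar
    have h1 : (0:ℝ) < (n:ℝ) + 1 := by positivity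
    have h2 : 1 / (2 * ((n:ℝ) + 1)) < 1 / ((n:ℝ) + 1) := by
      apply div_lt_div_of_pos_left one_pos h1
      linarith
    linarith
  choose S hSF hS1 hS2 using h
  have heq : {x | r < ψ x} = ⋃ n, S n := by
    ext x
    constructor
    · intro hx
      have hx' : r < ψ x := hx
      obtain ⟨n, hn⟩ := exists_nat_one_div_lt (sub_pos.2 hx')
      exact mem_iUnion.2 ⟨n, hS1 n (by
        have : (1:ℝ) / (n + 1) < ψ x - r := hn
        simp only [mem_setOf_eq]
        linarith)⟩
    · intro hx
      obtain ⟨n, hn⟩ := mem_iUnion.1 hx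
      have h2 := hS2 n hn
      have h3 : (0:ℝ) < 1 / (2 * ((n:ℝ) + 1)) := by positivity
      have h4 : r + 1 / (2 * ((n:ℝ) + 1)) < ψ x := h2
      simp only [mem_setOf_eq]
      linarith
  rw [heq]
  exact IsFsigmaBFT.iUnion hSF
end Ray

theorem stmt5 {X : Type*} [TopologicalSpace X] [PolishSpace X]
    (A : Set C(X, ℝ)) (hbd : ∀ x : X, ∃ C : ℝ, ∀ f ∈ A, |f x| ≤ C)
    (hseq : ∀ u : ℕ → C(X, ℝ), (∀ n, u n ∈ A) → ∃ φ : ℕ → ℕ, StrictMono φ ∧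
      ∃ ψ : X → ℝ, ∀ x, Tendsto (fun k => u (φ k) x) atTop (𝓝 (ψ x))) :
    ∀ ψ ∈ closure ((fun f : C(X, ℝ) => (f : X → ℝ)) '' A),
      ∃ g : ℕ → X → ℝ, (∀ n, Continuous (g n)) ∧
        ∀ x, Tendsto (fun n => g n x) atTop (𝓝 (ψ x)) := by
  intro ψ hψ
  letI := TopologicalSpace.upgradeIsCompletelyMetrizable X
  have happrox : ∀ (S : Finset X) (ε : ℝ), 0 < ε → ∃ f ∈ A, ∀ x ∈ S, |f x - ψ x| < ε := by
    intro S ε hε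
    have hopeq : {g : X → ℝ | ∀ x ∈ S, |g x - ψ x| < ε} =
        ⋂ x ∈ S, (fun g : X → ℝ => g x) ⁻¹' (Metric.ball (ψ x) ε) := by
      ext g
      simp [Real.dist_eq, Metric.mem_ball]
    have hopen : IsOpen {g : X → ℝ | ∀ x ∈ S, |g x - ψ x| < ε} := by
      rw [hopeq]
      exact isOpen_biInter_finset fun x _ =>
        (Metric.isOpen_ball).preimage (continuous_apply x)
    have hmemo : ψ ∈ {g : X → ℝ | ∀ x ∈ S, |g x - ψ x| < ε} := by
      intro x _
      simpa using hε
    rcases mem_closure_iff.1 hψ _ hopen hmemo with ⟨g, hgo, hgA⟩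
    obtain ⟨f, hfA, rfl⟩ := hgA
    exact ⟨f, hfA, hgo⟩
  have hbar : ∀ p q : ℝ, p < q → BarelyBFT ψ p q :=
    fun p q hpq => barely_of_seq happrox hseq hpq
  have hray1 : ∀ r : ℝ, IsFsigmaBFT {x | r < ψ x} := fun r => fsigma_ray hbar r
  have hray2 : ∀ r : ℝ, IsFsigmaBFT {x | ψ x < r} := by
    intro r
    have hbar' : ∀ p q : ℝ, p < q → BarelyBFT (fun x => -ψ x) p q := by
      intro p q hpq F hFc hFne h1 h2
      apply hbar (-q) (-p) (by linarith) F hFc hFne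
      · have : {x | (fun x => -ψ x) x ≤ p} = {x | -p ≤ ψ x} := by
          ext x; simp only [mem_setOf_eq]; constructor <;> intro h <;> linarith
        have h2' : {x | q ≤ (fun x => -ψ x) x} = {x | ψ x ≤ -q} := by
          ext x; simp only [mem_setOf_eq]; constructor <;> intro h <;> linarith
        rw [← h2']
        exact h2
      · have h1' : {x | (fun x => -ψ x) x ≤ p} = {x | -p ≤ ψ x} := by
          ext x; simp only [mem_setOf_eq]; constructor <;> intro h <;> linarith
        rw [← h1']
        exact h1
    have heq : {x | ψ x < r} = {x | -r < (fun x => -ψ x) x} := by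
      ext x; simp only [mem_setOf_eq]; constructor <;> intro h <;> linarith
    rw [heq]
    exact fsigma_ray hbar' (-r)
  have hIoo : ∀ a b : ℝ, a < b → IsFsigmaBFT {x | a < ψ x ∧ ψ x < b} := by
    intro a b _
    exact (hray1 a).inter (hray2 b)
  exact baire_one_of_fsigma hIoo
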